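/- Let F1 and F1' be finite subsets of ℤ², both uniquely determined by their line sums. Suppose points (x_1,y_1), (x_2,y_2), …, (x_t,y_t) all lie in F1 \ F1' and points (x_2,y_1), (x_3,y_2), …, (x_t,y_{t−1}) all lie in F1' \ F1. Then r_{x_1}(F1) > r_{x_2}(F1) > … > r_{x_t}(F1) and r_{x_1}(F1') < r_{x_2}(F1') < … < r_{x_t}(F1'); consequently Σ_{s=1}^{t} |r_{x_s}(F1') − r_{x_s}(F1)| ≥ ⌊t²/2⌋. -/

import Mathlib

open Finset

/-- The row sum `r_i(F)`: the number of elements of `F` in row `i`. -/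
def rowSum (F : Finset (ℤ × ℤ)) (i : ℤ) : ℤ :=
  ((F.filter fun p => p.1 = i).card : ℤ)

/-- The column sum `c_j(F)`: the number of elements of `F` in column `j`. -/
def colSum (F : Finset (ℤ × ℤ)) (j : ℤ) : ℤ :=
  ((F.filter fun p => p.2 = j).card : ℤ)

/-- `F` is uniquely determined by its line sums. -/
def uniquelyDetermined (F : Finset (ℤ × ℤ)) : Prop :=
  ∀ F' : Finset (ℤ × ℤ),
    (∀ i, rowSum F' i = rowSum F i) → (∀ j, colSum F' j = colSum F j) → F' = F

/-- `Σ_j |c_j(F1) − c_j(F2)| + Σ_i |r_i(F1) − r_i(F2)|`; the sums over all of `ℤ`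
reduce to the finite index sets below, since all other terms vanish. -/
def lineDiff (F1 F2 : Finset (ℤ × ℤ)) : ℤ :=
  (∑ j ∈ (F1 ∪ F2).image Prod.snd, |colSum F1 j - colSum F2 j|)
    + ∑ i ∈ (F1 ∪ F2).image Prod.fst, |rowSum F1 i - rowSum F2 i|

/-- `α(F1, F2)`. -/
noncomputable def alpha (F1 F2 : Finset (ℤ × ℤ)) : ℝ :=
  (lineDiff F1 F2 : ℝ) / 2

lemma rowSum_eq_sum (F : Finset (ℤ × ℤ)) (i : ℤ) :
    rowSum F i = ∑ p ∈ F, if p.1 = i then (1:ℤ) else 0 := by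
  simp [rowSum, Finset.sum_boole]

lemma colSum_eq_sum (F : Finset (ℤ × ℤ)) (j : ℤ) :
    colSum F j = ∑ p ∈ F, if p.2 = j then (1:ℤ) else 0 := by
  simp [colSum, Finset.sum_boole]

lemma no_switch {F : Finset (ℤ × ℤ)} (hF : uniquelyDetermined F)
    {a b a' b' : ℤ} (h1 : (a, b) ∈ F) (h2 : (a', b') ∈ F)
    (h3 : (a, b') ∉ F) : (a', b) ∈ F := by
  by_contra h4
  have ha : a ≠ a' := fun h => h4 (h ▸ h1)
  have hb : b ≠ b' := fun h => h3 (h ▸ h1)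
  set E := (F.erase (a, b)).erase (a', b') with hE
  set F' := insert (a, b') (insert (a', b) E) with hF'def
  have hEF : ∀ p, p ∈ E → p ∈ F := fun p hp =>
    Finset.mem_of_mem_erase (Finset.mem_of_mem_erase hp)
  have hab'E : (a, b') ∉ insert (a', b) E := by
    intro h
    rcases Finset.mem_insert.mp h with h | h
    · exact ha (congrArg Prod.fst h)
    · exact h3 (hEF _ h)
  have ha'bE : (a', b) ∉ E := fun h => h4 (hEF _ h)
  have key : ∀ f : ℤ × ℤ → ℤ, f (a, b') + f (a', b) = f (a, b) + f (a', b') →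
      ∑ p ∈ F', f p = ∑ p ∈ F, f p := by
    intro f hf
    have h2' : (a', b') ∈ F.erase (a, b) :=
      Finset.mem_erase.mpr ⟨fun h => ha (congrArg Prod.fst h).symm, h2⟩
    rw [hF'def, Finset.sum_insert hab'E, Finset.sum_insert ha'bE, hE,
      Finset.sum_erase_eq_sub h2', Finset.sum_erase_eq_sub h1]
    linarith
  have hrow : ∀ i, rowSum F' i = rowSum F i := by
    intro i
    rw [rowSum_eq_sum, rowSum_eq_sum]
    exact key _ (by by_cases h : a = i <;> by_cases h' : a' = i <;> simp [h, h'])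
  have hcol : ∀ j, colSum F' j = colSum F j := by
    intro j
    rw [colSum_eq_sum, colSum_eq_sum]
    exact key _ (by by_cases h : b = j <;> by_cases h' : b' = j <;> simp [h, h'])
  have hFF : F' = F := hF F' hrow hcol
  exact h3 (hFF ▸ Finset.mem_insert_self _ _)

lemma row_lt {F : Finset (ℤ × ℤ)} (hF : uniquelyDetermined F)
    {a a' b : ℤ} (h1 : (a, b) ∈ F) (h2 : (a', b) ∉ F) :
    rowSum F a' < rowSum F a := by
  have key : ∀ j, (a', j) ∈ F → (a, j) ∈ F := fun j hj => no_switch hF hj h1 h2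
  have hcard : (F.filter fun p => p.1 = a').card < (F.filter fun p => p.1 = a).card := by
    have hsub : (F.filter fun p => p.1 = a').card ≤
        ((F.filter fun p => p.1 = a).erase (a, b)).card := by
      apply Finset.card_le_card_of_injOn (fun p => (a, p.2))
      · intro p hp
        simp only [Finset.mem_filter, Finset.mem_coe] at hp
        obtain ⟨hpF, hp1⟩ := hp
        have hpm : (a', p.2) ∈ F := by
          have : (p.1, p.2) ∈ F := by simpa using hpF
          rwa [hp1] at this
        have hin : (a, p.2) ∈ F := key p.2 hpm
        have hne : p.2 ≠ b := fun h => h2 (h ▸ hpm)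
        refine Finset.mem_erase.mpr ⟨by simp [Prod.ext_iff, hne], Finset.mem_filter.mpr ⟨hin, rfl⟩⟩
      · intro p hp q hq hpq
        simp only [Finset.coe_filter, Set.mem_setOf_eq] at hp hq
        have h5 : p.2 = q.2 := by simpa using congrArg Prod.snd hpq
        exact Prod.ext (hp.2.trans hq.2.symm) h5
    have hmem : (a, b) ∈ F.filter fun p => p.1 = a := by simp [h1]
    have := Finset.card_erase_of_mem hmem
    have hpos : 0 < (F.filter fun p => p.1 = a).card := Finset.card_pos.mpr ⟨_, hmem⟩
    omega
  simp only [rowSum]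
  exact_mod_cast hcard

lemma key_sum (t : ℕ) :
    ∑ s ∈ Finset.Icc 1 t, |(t:ℤ) + 1 - 2 * (s:ℤ)| = ((t^2/2 : ℕ) : ℤ) := by
  induction t using Nat.twoStepInduction with
  | zero => simp
  | one => norm_num
  | more n ih _ =>
    have htop : ∑ s ∈ Finset.Icc 1 (n+2), |((n+2:ℕ):ℤ) + 1 - 2 * (s:ℤ)| =
        (∑ s ∈ Finset.Icc 1 (n+1), |((n+2:ℕ):ℤ) + 1 - 2 * (s:ℤ)|) +
          |((n+2:ℕ):ℤ) + 1 - 2 * ((n+2:ℕ):ℤ)| := by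
      rw [Finset.sum_Icc_succ_top (by omega)]
    rw [htop]
    rw [show Finset.Icc 1 (n+1) = insert 1 (Finset.Icc 2 (n+1)) by ext m; simp; omega]
    rw [Finset.sum_insert (by simp)]
    have hshift : ∑ s ∈ Finset.Icc 2 (n+1), |((n+2:ℕ):ℤ) + 1 - 2 * (s:ℤ)| =
        ∑ s ∈ Finset.Icc 1 n, |((n:ℕ):ℤ) + 1 - 2 * (s:ℤ)| := by
      apply Finset.sum_nbij' (i := fun s => s - 1) (j := fun s => s + 1)
      · intro a ha; simp only [Finset.mem_Icc] at *; omega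
      · intro a ha; simp only [Finset.mem_Icc] at *; omega
      · intro a ha; simp only [Finset.mem_Icc] at ha; omega
      · intro a ha; simp only [Finset.mem_Icc] at ha; omega
      · intro a ha
        simp only [Finset.mem_Icc] at ha
        congr 1
        omega
    rw [hshift, ih]
    have h4 : ((n+2)^2/2 : ℕ) = n^2/2 + (2*n+2) := by
      have h5 : (n+2)^2 = n^2 + 2*(2*n+2) := by ring
      rw [h5, Nat.add_mul_div_left _ _ (by norm_num)]
    rw [h4]
    have e1 : |((n+2:ℕ):ℤ) + 1 - 2 * ((1:ℕ):ℤ)| = (n:ℤ) + 1 := by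
      rw [abs_of_nonneg (by push_cast; linarith)]; push_cast; ring
    have e2 : |((n+2:ℕ):ℤ) + 1 - 2 * ((n+2:ℕ):ℤ)| = (n:ℤ) + 1 := by
      rw [show ((n+2:ℕ):ℤ) + 1 - 2 * ((n+2:ℕ):ℤ) = -((n:ℤ)+1) by push_cast; ring,
        abs_neg, abs_of_nonneg (by positivity)]
    rw [e1, e2]
    push_cast
    ring

theorem staircase_two_unique (F1 F1' : Finset (ℤ × ℤ))
    (hF1 : uniquelyDetermined F1) (hF1' : uniquelyDetermined F1')
    (t : ℕ) (x y : ℕ → ℤ)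
    (hin : ∀ s : ℕ, 1 ≤ s → s ≤ t → (x s, y s) ∈ F1 ∧ (x s, y s) ∉ F1')
    (hout : ∀ s : ℕ, 1 ≤ s → s < t → (x (s + 1), y s) ∈ F1' ∧ (x (s + 1), y s) ∉ F1) :
    (∀ s s' : ℕ, 1 ≤ s → s < s' → s' ≤ t → rowSum F1 (x s') < rowSum F1 (x s)) ∧
    (∀ s s' : ℕ, 1 ≤ s → s < s' → s' ≤ t → rowSum F1' (x s) < rowSum F1' (x s')) ∧
    ((t ^ 2 / 2 : ℕ) : ℤ) ≤ ∑ s ∈ Finset.Icc 1 t, |rowSum F1' (x s) - rowSum F1 (x s)| := by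
  have step1 : ∀ s, 1 ≤ s → s < t → rowSum F1 (x (s+1)) < rowSum F1 (x s) := by
    intro s h1 h2
    exact row_lt hF1 (hin s h1 h2.le).1 (hout s h1 h2).2
  have step2 : ∀ s, 1 ≤ s → s < t → rowSum F1' (x s) < rowSum F1' (x (s+1)) := by
    intro s h1 h2
    exact row_lt hF1' (hout s h1 h2).1 (hin s h1 h2.le).2
  have chain : ∀ s s' : ℕ, 1 ≤ s → s ≤ s' → s' ≤ t →
      rowSum F1 (x s') + ((s':ℤ) - (s:ℤ)) ≤ rowSum F1 (x s) ∧
      rowSum F1' (x s) + ((s':ℤ) - (s:ℤ)) ≤ rowSum F1' (x s') := by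
    intro s s' h1 h2
    induction s', h2 using Nat.le_induction with
    | base => intro _; constructor <;> omega
    | succ n hn ih =>
      intro hnt
      obtain ⟨ih1, ih2⟩ := ih (by omega)
      have hs1 := step1 n (le_trans h1 hn) (by omega)
      have hs2 := step2 n (le_trans h1 hn) (by omega)
      push_cast
      constructor <;> omega
  refine ⟨?_, ?_, ?_⟩
  · intro s s' h1 h2 h3
    have := (chain s s' h1 h2.le h3).1
    omega
  · intro s s' h1 h2 h3
    have := (chain s s' h1 h2.le h3).2
    omega
  · set A : ℕ → ℤ := fun s => rowSum F1' (x s) - rowSum F1 (x s) with hA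
    have refl_sum : ∑ s ∈ Finset.Icc 1 t, |A (t + 1 - s)| = ∑ s ∈ Finset.Icc 1 t, |A s| := by
      apply Finset.sum_nbij' (i := fun s => t + 1 - s) (j := fun s => t + 1 - s)
      · intro a ha; simp only [Finset.mem_Icc] at *; omega
      · intro a ha; simp only [Finset.mem_Icc] at *; omega
      · intro a ha; simp only [Finset.mem_Icc] at ha; omega
      · intro a ha; simp only [Finset.mem_Icc] at ha; omega
      · intro a ha; rfl
    have pointwise : ∀ s ∈ Finset.Icc 1 t,
        2 * |(t:ℤ) + 1 - 2 * (s:ℤ)| ≤ |A s| + |A (t + 1 - s)| := by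
      intro s hs
      simp only [Finset.mem_Icc] at hs
      set s2 := t + 1 - s with hs2def
      have hs2 : 1 ≤ s2 ∧ s2 ≤ t := by omega
      rcases le_total s s2 with h | h
      · obtain ⟨c1, c2⟩ := chain s s2 hs.1 h hs2.2
        have hgap : 2 * ((s2:ℤ) - (s:ℤ)) ≤ A s2 - A s := by simp only [hA]; omega
        have hb1 := le_abs_self (A s2)
        have hb2 := neg_abs_le (A s)
        have hc : (t:ℤ) + 1 - 2 * (s:ℤ) = (s2:ℤ) - (s:ℤ) := by omega
        rw [hc, abs_of_nonneg (by omega)]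
        linarith
      · obtain ⟨c1, c2⟩ := chain s2 s hs2.1 h hs.2
        have hgap : 2 * ((s:ℤ) - (s2:ℤ)) ≤ A s - A s2 := by simp only [hA]; omega
        have hb1 := le_abs_self (A s)
        have hb2 := neg_abs_le (A s2)
        have hc : (t:ℤ) + 1 - 2 * (s:ℤ) = -((s:ℤ) - (s2:ℤ)) := by omega
        rw [hc, abs_neg, abs_of_nonneg (by omega)]
        linarith
    have hsum : 2 * ((t^2/2 : ℕ) : ℤ) ≤ 2 * ∑ s ∈ Finset.Icc 1 t, |A s| := by
      calc 2 * ((t^2/2 : ℕ) : ℤ)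
          = ∑ s ∈ Finset.Icc 1 t, 2 * |(t:ℤ) + 1 - 2 * (s:ℤ)| := by
            rw [← Finset.mul_sum, key_sum t]
        _ ≤ ∑ s ∈ Finset.Icc 1 t, (|A s| + |A (t + 1 - s)|) :=
            Finset.sum_le_sum pointwise
        _ = 2 * ∑ s ∈ Finset.Icc 1 t, |A s| := by
            rw [Finset.sum_add_distrib, refl_sum]; ring
    have : ∑ s ∈ Finset.Icc 1 t, |A s|
        = ∑ s ∈ Finset.Icc 1 t, |rowSum F1' (x s) - rowSum F1 (x s)| := rfl
    omega
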